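/- Let (R, m) be a Noetherian local ring, let a_{•,0} and a_{•,1} be m-filtrations on R, and let (a_{•,t})_{t∈[0,1]} be the geodesic between them. Then for all 0 ≤ t < t' ≤ 1 and all λ > 0, a_{λ,0} ∩ a_{λ,t'} ⊆ a_{λ,t}. -/

import Mathlib

open IsLocalRing

variable {R : Type*} [CommRing R] [IsNoetherianRing R] [IsLocalRing R]

/-- An ideal is `m`-primary: proper with radical the maximal ideal. -/
def IsPrimaryToMax (R : Type*) [CommRing R] [IsLocalRing R] (I : Ideal R) : Prop :=
  I ≠ ⊤ ∧ I.radical = maximalIdeal R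

/-- An `m`-filtration on a Noetherian local ring `(R, m)`: a family of `m`-primary ideals
indexed by `ℝ` (only the values at `λ > 0` matter, with the convention `a 0 = R`),
decreasing, left-continuous and multiplicative. -/
structure IsMFiltration (R : Type*) [CommRing R] [IsLocalRing R] (a : ℝ → Ideal R) : Prop where
  primary : ∀ lam : ℝ, 0 < lam → IsPrimaryToMax R (a lam)
  antitone : ∀ lam mu : ℝ, 0 < mu → mu < lam → a lam ≤ a mu
  left_cont : ∀ lam : ℝ, 0 < lam → ∃ ε > (0 : ℝ), ∀ ε' : ℝ, 0 < ε' → ε' ≤ ε →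
    a (lam - ε') = a lam
  mul : ∀ lam mu : ℝ, 0 < lam → 0 < mu → a lam * a mu ≤ a (lam + mu)
  zero : a 0 = ⊤

/-- The geodesic between two `m`-filtrations `a₀` and `a₁` at time `t`:
`a_{λ,t} = Σ_{μ,ν ≥ 0, (1−t)μ + tν = λ} (a₀_μ ∩ a₁_ν)` (sum of ideals, i.e. supremum
over all such pairs `(μ, ν)` of nonnegative reals). -/
noncomputable def geodesic {R : Type*} [CommRing R] (a₀ a₁ : ℝ → Ideal R)
    (t lam : ℝ) : Ideal R :=
  ⨆ (p : ℝ × ℝ) (_ : 0 ≤ p.1 ∧ 0 ≤ p.2 ∧ (1 - t) * p.1 + t * p.2 = lam),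
    (a₀ p.1 ⊓ a₁ p.2)

/-- Along the geodesic `(a_{•,t})_{t ∈ [0,1]}` between `m`-filtrations `a₀ = a_{•,0}` and
`a₁ = a_{•,1}`, for `0 ≤ t < t' ≤ 1` and `λ > 0` one has `a_{λ,0} ∩ a_{λ,t'} ⊆ a_{λ,t}`. -/
private lemma IsMFiltration.mono {a : ℝ → Ideal R} (h : IsMFiltration R a) {mu lam : ℝ}
    (h0 : 0 ≤ mu) (hml : mu ≤ lam) : a lam ≤ a mu := by
  rcases h0.eq_or_lt with rfl | hpos
  · rw [h.zero]; exact le_top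
  rcases hml.eq_or_lt with rfl | hlt
  · exact le_rfl
  · exact h.antitone lam mu hpos hlt

theorem geodesic_subinterval (a₀ a₁ : ℝ → Ideal R)
    (h₀ : IsMFiltration R a₀) (h₁ : IsMFiltration R a₁)
    (t t' : ℝ) (ht : 0 ≤ t) (htt' : t < t') (ht' : t' ≤ 1) :
    ∀ lam : ℝ, 0 < lam →
      a₀ lam ⊓ geodesic a₀ a₁ t' lam ≤ geodesic a₀ a₁ t lam := by
  intro lam hlam x hx
  obtain ⟨hx0, hxg⟩ := Submodule.mem_inf.1 hx
  have ht1 : t < 1 := lt_of_lt_of_le htt' ht'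
  have ht'0 : 0 < t' := lt_of_le_of_lt ht htt'
  set B : Ideal R := ⨆ (p : ℝ × ℝ)
    (_ : (0 ≤ p.1 ∧ 0 ≤ p.2 ∧ (1 - t') * p.1 + t' * p.2 = lam) ∧ lam ≤ p.1),
    (a₀ p.1 ⊓ a₁ p.2) with hBdef
  set C : Ideal R := ⨆ (p : ℝ × ℝ)
    (_ : (0 ≤ p.1 ∧ 0 ≤ p.2 ∧ (1 - t') * p.1 + t' * p.2 = lam) ∧ p.1 < lam),
    (a₀ p.1 ⊓ a₁ p.2) with hCdef
  have hsplit : geodesic a₀ a₁ t' lam ≤ B ⊔ C := by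
    refine iSup₂_le fun p hp => ?_
    rcases le_or_gt lam p.1 with h | h
    · exact le_sup_of_le_left (le_iSup₂_of_le p ⟨hp, h⟩ le_rfl)
    · exact le_sup_of_le_right (le_iSup₂_of_le p ⟨hp, h⟩ le_rfl)
  have hB0 : B ≤ a₀ lam :=
    iSup₂_le fun p hp => inf_le_left.trans (h₀.mono hlam.le hp.2)
  have hBg : B ≤ geodesic a₀ a₁ t lam := by
    refine iSup₂_le fun p hp => ?_
    obtain ⟨⟨h1, h2, h3⟩, h4⟩ := hp
    have h1t : (0:ℝ) < 1 - t := by linarith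
    have hnu : p.2 ≤ lam := by nlinarith
    set mu' := (lam - t * p.2) / (1 - t) with hmu'def
    have hmu'0 : 0 ≤ mu' := div_nonneg (by nlinarith) h1t.le
    have hmu'le : mu' ≤ p.1 := by
      rw [hmu'def, div_le_iff₀ h1t]; nlinarith
    have heq : (1 - t) * mu' + t * p.2 = lam := by
      rw [hmu'def]; field_simp; ring
    refine le_trans (inf_le_inf (h₀.mono hmu'0 hmu'le) le_rfl) ?_
    exact le_iSup₂_of_le (mu', p.2) ⟨hmu'0, h2, heq⟩ le_rfl
  have hC1 : C ≤ a₁ lam := by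
    refine iSup₂_le fun p hp => ?_
    obtain ⟨⟨h1, h2, h3⟩, h4⟩ := hp
    exact inf_le_right.trans (h₁.mono hlam.le (by nlinarith))
  have hll : a₀ lam ⊓ a₁ lam ≤ geodesic a₀ a₁ t lam :=
    le_iSup₂_of_le (lam, lam) ⟨hlam.le, hlam.le, by ring⟩ le_rfl
  obtain ⟨b, hb, c, hc, rfl⟩ := Submodule.mem_sup.1 (hsplit hxg)
  have hcmem : c ∈ a₀ lam ⊓ a₁ lam :=
    Submodule.mem_inf.2 ⟨by simpa using sub_mem hx0 (hB0 hb), hC1 hc⟩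
  exact add_mem (hBg hb) (hll hcmem)
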